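/- Fix d ≥ 1, σ > 0, C_K > 0, R_f > 0, x_0 ∈ ℝ^d, and a measurable kernel K_σ : ℝ^d × ℝ^d → ℝ with |K_σ(x, x')| ≤ σ^{−d}·C_K for all x, x'. Let X = ((x_1,y_1),…,(x_n,y_n)) with x_j ∈ ℝ^d and |y_j| ≤ R_f, and let X' be obtained from X by replacing the single entry (x_i, y_i) with (x'_i, y'_i), |y'_i| ≤ R_f. Define d_σ(x_0, X) = Σ_j K_σ(x_0, x_j) and, when d_σ(x_0,X) ≠ 0, the Nadaraya–Watson estimate f̂(x_0, X) = Σ_j K_σ(x_0, x_j) y_j / d_σ(x_0, X). Then: (i) |d_σ(x_0, X) − d_σ(x_0, X')| ≤ 2σ^{−d}C_K; and (ii) if d_σ(x_0,X) ≠ 0 and d_σ(x_0,X') > 0, then |f̂(x_0,X) − f̂(x_0,X')| ≤ 2C_K σ^{−d}·(R_f + |f̂(x_0,X)|)/d_σ(x_0,X'), and, with Π_{R_f}(t) = (R_f/max(|t|,R_f))·t, |Π_{R_f}(f̂(x_0,X)) − Π_{R_f}(f̂(x_0,X'))| ≤ 8 R_f C_K σ^{−d} / d_σ(x_0, X'). 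-/

import Mathlib

open MeasureTheory ProbabilityTheory Matrix
open scoped Classical NNReal ENNReal RealInnerProductSpace

noncomputable section

namespace EPTR

variable {Z : Type*}

/-- Hamming distance between two datasets of size `n`. -/
def hDist {n : ℕ} (X X' : Fin n → Z) : ℕ :=
  (Finset.univ.filter fun i => X i ≠ X' i).card

/-- Two datasets are neighbors if they differ in exactly one coordinate. -/
def Neighbor {n : ℕ} (X X' : Fin n → Z) : Prop := hDist X X' = 1

/-- Gaussian measure on Euclidean space with mean `m` and covariance `v • I`
(the product of one-dimensional Gaussians of variance `v`). -/
def gaussianE {ι : Type*} [Fintype ι] (m : EuclideanSpace ℝ ι) (v : ℝ≥0) :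
    Measure (EuclideanSpace ℝ ι) :=
  (Measure.pi fun i => gaussianReal (m i) v).map (MeasurableEquiv.toLp 2 (ι → ℝ))

/-- The threshold shift `M = 1 + (2/ε) log (max (1/δ) (1/ε))` of the ePTR mechanism. -/
def Mshift (ε δ : ℝ) : ℝ := 1 + 2 / ε * Real.log (max (1 / δ) (1 / ε))

/-- The release probability of the ePTR mechanism at sub-distance value `g`. -/
def relProb (ε δ g : ℝ) : ℝ :=
  Real.exp (ε * (g - Mshift ε δ) / 2) / (Real.exp (ε * (g - Mshift ε δ) / 2) + 1)

/-- The standard deviation `s = (2α/ε)√(2 log(1.25/δ))` of the ePTR Gaussian noise. -/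
def noiseSD (ε δ α : ℝ) : ℝ := 2 * α / ε * Real.sqrt (2 * Real.log (1.25 / δ))

/-- Output distribution of the ePTR mechanism on input dataset `X`
(Euclidean-space valued version). -/
def ePTR {n : ℕ} {ι : Type*} [Fintype ι] (ε δ α : ℝ)
    (θhat : (Fin n → Z) → EuclideanSpace ℝ ι) (γ : (Fin n → Z) → ℝ)
    (πbot : Measure (EuclideanSpace ℝ ι)) (X : Fin n → Z) :
    Measure (EuclideanSpace ℝ ι) :=
  ENNReal.ofReal (relProb ε δ (γ X)) • gaussianE (θhat X) (Real.toNNReal (noiseSD ε δ α ^ 2))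
    + ENNReal.ofReal (1 - relProb ε δ (γ X)) • πbot

/-- Output distribution of the ePTR mechanism on input dataset `X` (real valued version). -/
def ePTR1 {n : ℕ} (ε δ α : ℝ)
    (θhat : (Fin n → Z) → ℝ) (γ : (Fin n → Z) → ℝ)
    (πbot : Measure ℝ) (X : Fin n → Z) : Measure ℝ :=
  ENNReal.ofReal (relProb ε δ (γ X)) • gaussianReal (θhat X) (Real.toNNReal (noiseSD ε δ α ^ 2))
    + ENNReal.ofReal (1 - relProb ε δ (γ X)) • πbot

/-- `(ε, δ)`-differential privacy of a mechanism: for all neighboring datasets `X, X'`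
and all measurable events `B`, `μ_X(B) ≤ e^ε μ_{X'}(B) + δ`. -/
def IsDP {n : ℕ} {Ω : Type*} [MeasurableSpace Ω]
    (mech : (Fin n → Z) → Measure Ω) (ε δ : ℝ) : Prop :=
  ∀ X X' : Fin n → Z, Neighbor X X' → ∀ B : Set Ω, MeasurableSet B →
    mech X B ≤ ENNReal.ofReal (Real.exp ε) * mech X' B + ENNReal.ofReal δ

/-- Projection onto the closed ball of radius `a` in a normed space:
`proj a v = (a / max ‖v‖ a) • v`. -/
def proj {V : Type*} [NormedAddCommGroup V] [Module ℝ V] (a : ℝ) (v : V) : V :=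
  (a / max ‖v‖ a) • v

/-- Identification of `Fin p → ℝ` with Euclidean space. -/
def toE {p : ℕ} : (Fin p → ℝ) → EuclideanSpace ℝ (Fin p) :=
  ⇑(EuclideanSpace.equiv (Fin p) ℝ).symm

/-- ℓ²-operator norm of a square matrix. -/
def opNorm {p : ℕ} (A : Matrix (Fin p) (Fin p) ℝ) : ℝ :=
  ‖Matrix.toEuclideanCLM (𝕜 := ℝ) A‖

/-- Smallest eigenvalue of a (symmetric) matrix, via the Rayleigh quotient. -/
def lambdaMin {p : ℕ} (A : Matrix (Fin p) (Fin p) ℝ) : ℝ :=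
  ⨅ v : Metric.sphere (0 : EuclideanSpace ℝ (Fin p)) 1,
    ⟪Matrix.toEuclideanCLM (𝕜 := ℝ) A v.1, v.1⟫

/-- Index set of data points carrying label `k`. -/
def Ik {n K : ℕ} {E : Type*} (X : Fin n → E × Fin K) (k : Fin K) : Finset (Fin n) :=
  Finset.univ.filter fun j => (X j).2 = k

/-- Class-`k` sample frequency `μ̂_k = |I_k| / n`. -/
def classFreq {n K : ℕ} {E : Type*} (X : Fin n → E × Fin K) (k : Fin K) : ℝ :=
  (Ik X k).card / n

/-- Class-`k` sample mean (equal to `0` if the class is empty). -/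
def classMean {n K p : ℕ} (X : Fin n → EuclideanSpace ℝ (Fin p) × Fin K) (k : Fin K) :
    EuclideanSpace ℝ (Fin p) :=
  ((Ik X k).card : ℝ)⁻¹ • ∑ j ∈ Ik X k, (X j).1

/-- The sub-distance of the ePTR Bayes classifier:
`γ(X) = max(min_k |I_k(X)| - c₀ n - 1, 0)`. -/
def gammaBC {n K : ℕ} {E : Type*} (c0 : ℝ) (X : Fin n → E × Fin K) : ℝ :=
  max (((⨅ k : Fin K, (Ik X k).card : ℕ) : ℝ) - c0 * n - 1) 0

end EPTR

lemma proj_eq_clamp (a : ℝ) (ha : 0 < a) (t : ℝ) :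
    EPTR.proj a t = max (-a) (min t a) := by
  unfold EPTR.proj
  rw [Real.norm_eq_abs, smul_eq_mul]
  rcases le_or_gt |t| a with h | h
  · rw [max_eq_right h, div_self ha.ne', one_mul,
      min_eq_left (le_of_abs_le h), max_eq_right (neg_le_of_abs_le h)]
  · rw [max_eq_left h.le]
    rcases le_or_gt 0 t with ht | ht
    · rw [abs_of_nonneg ht] at h ⊢
      rw [min_eq_right h.le, max_eq_right (by linarith)]
      exact div_mul_cancel₀ a (by linarith : (0:ℝ) < t).ne'
    · rw [abs_of_neg ht] at h ⊢
      rw [min_eq_left (by linarith), max_eq_left (by linarith)]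
      have htne : t ≠ 0 := ht.ne
      field_simp

lemma clamp_abs_le (a : ℝ) (ha : 0 < a) (t : ℝ) : |max (-a) (min t a)| ≤ a := by
  rw [abs_le]
  exact ⟨le_max_left _ _, max_le (by linarith) (min_le_right _ _)⟩

lemma clamp_lipschitz (a s t : ℝ) :
    |max (-a) (min s a) - max (-a) (min t a)| ≤ |s - t| := by
  have h1 : |min s a - min t a| ≤ |s - t| := by
    simpa using abs_min_sub_min_le_max s a t a
  calc |max (-a) (min s a) - max (-a) (min t a)|
      = |max (min s a) (-a) - max (min t a) (-a)| := by rw [max_comm (-a), max_comm (-a)]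
    _ ≤ |min s a - min t a| := abs_max_sub_max_le_abs _ _ _
    _ ≤ |s - t| := h1

lemma clamp_sens {Rf A D f f' : ℝ} (hRf : 0 < Rf) (hA : 0 < A) (hD : 0 < D)
    (h : |f - f'| ≤ 2 * A * (Rf + |f|) / D) :
    |max (-Rf) (min f Rf) - max (-Rf) (min f' Rf)| ≤ 8 * Rf * A / D := by
  rcases le_or_gt |f| (3 * Rf) with hf | hf
  · refine (clamp_lipschitz Rf f f').trans (h.trans ?_)
    rw [div_le_div_iff₀ hD hD]
    nlinarith [abs_nonneg f, mul_pos hA hD]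
  · by_cases heq : max (-Rf) (min f Rf) = max (-Rf) (min f' Rf)
    · rw [heq, sub_self, abs_zero]
      positivity
    · have key : (|f| + Rf) / 2 ≤ |f - f'| := by
        rcases le_or_gt 0 f with ht | ht
        · rw [abs_of_nonneg ht] at hf ⊢
          have hcf : max (-Rf) (min f Rf) = Rf := by
            rw [min_eq_right (by linarith), max_eq_right (by linarith)]
          have hf' : f' < Rf := by
            by_contra hc
            push_neg at hc
            rw [hcf, min_eq_right hc, max_eq_right (by linarith)] at heq
            exact heq rfl
          have := le_abs_self (f - f')
          linarith
        · rw [abs_of_neg ht] at hf ⊢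
          have hcf : max (-Rf) (min f Rf) = -Rf := by
            rw [min_eq_left (by linarith), max_eq_left (by linarith)]
          have hf' : -Rf < f' := by
            by_contra hc
            push_neg at hc
            rw [hcf, min_eq_left (by linarith), max_eq_left hc] at heq
            exact heq rfl
          have := neg_le_abs (f - f')
          linarith
      have hD4 : D ≤ 4 * A := by
        have h2 := key.trans h
        rw [le_div_iff₀ hD] at h2
        nlinarith [abs_nonneg f]
      have h2Rf : |max (-Rf) (min f Rf) - max (-Rf) (min f' Rf)| ≤ 2 * Rf := by
        calc _ ≤ |max (-Rf) (min f Rf)| + |max (-Rf) (min f' Rf)| := abs_sub _ _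
          _ ≤ 2 * Rf := by
              have := clamp_abs_le Rf hRf f
              have := clamp_abs_le Rf hRf f'
              linarith
      refine h2Rf.trans ?_
      rw [le_div_iff₀ hD]
      nlinarith

/-- Local sensitivity of the Nadaraya–Watson estimator: replacing a single data point changes
the degree function `d_σ(x₀, X) = Σ_j K_σ(x₀, x_j)` by at most `2σ^{-d}C_K`, and when the
degree functions are nonzero (resp. positive) the NW estimate changes by at most
`2C_Kσ^{-d}(R_f + |f̂(x₀, X)|)/d_σ(x₀, X')`; after clipping to `[-R_f, R_f]` the change is at
most `8R_fC_Kσ^{-d}/d_σ(x₀, X')`. -/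
theorem nw_sensitivity {d n : ℕ} (hd : 1 ≤ d) (hn : 1 ≤ n)
    {σ CK Rf : ℝ} (hσ : 0 < σ) (hCK : 0 < CK) (hRf : 0 < Rf)
    (x0 : EuclideanSpace ℝ (Fin d))
    (Kσ : EuclideanSpace ℝ (Fin d) → EuclideanSpace ℝ (Fin d) → ℝ)
    (hKmeas : Measurable fun z : EuclideanSpace ℝ (Fin d) × EuclideanSpace ℝ (Fin d) =>
      Kσ z.1 z.2)
    (hKb : ∀ x x', |Kσ x x'| ≤ σ ^ (-(d : ℤ)) * CK)
    (i : Fin n) (X X' : Fin n → EuclideanSpace ℝ (Fin d) × ℝ)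
    (hY : ∀ j, |(X j).2| ≤ Rf) (hY'i : |(X' i).2| ≤ Rf)
    (hsame : ∀ j, j ≠ i → X' j = X j) :
    |(∑ j, Kσ x0 (X j).1) - ∑ j, Kσ x0 (X' j).1| ≤ 2 * σ ^ (-(d : ℤ)) * CK ∧
      ((∑ j, Kσ x0 (X j).1) ≠ 0 → 0 < ∑ j, Kσ x0 (X' j).1 →
        |(∑ j, Kσ x0 (X j).1 * (X j).2) / (∑ j, Kσ x0 (X j).1)
              - (∑ j, Kσ x0 (X' j).1 * (X' j).2) / (∑ j, Kσ x0 (X' j).1)|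
            ≤ 2 * CK * σ ^ (-(d : ℤ)) *
                (Rf + |(∑ j, Kσ x0 (X j).1 * (X j).2) / (∑ j, Kσ x0 (X j).1)|) /
                  (∑ j, Kσ x0 (X' j).1) ∧
          |EPTR.proj Rf ((∑ j, Kσ x0 (X j).1 * (X j).2) / (∑ j, Kσ x0 (X j).1))
                - EPTR.proj Rf ((∑ j, Kσ x0 (X' j).1 * (X' j).2) / (∑ j, Kσ x0 (X' j).1))|
            ≤ 8 * Rf * CK * σ ^ (-(d : ℤ)) / (∑ j, Kσ x0 (X' j).1)) := by
  set D := ∑ j, Kσ x0 (X j).1 with hDdef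
  set D' := ∑ j, Kσ x0 (X' j).1 with hD'def
  set N := ∑ j, Kσ x0 (X j).1 * (X j).2 with hNdef
  set N' := ∑ j, Kσ x0 (X' j).1 * (X' j).2 with hN'def
  set A := σ ^ (-(d : ℤ)) * CK with hAdef
  have hA : 0 < A := mul_pos (zpow_pos hσ _) hCK
  have hDD : D - D' = Kσ x0 (X i).1 - Kσ x0 (X' i).1 := by
    rw [hDdef, hD'def, ← Finset.sum_sub_distrib]
    rw [Finset.sum_eq_single i]
    · intro b _ hb
      rw [hsame b hb, sub_self]
    · intro h; exact absurd (Finset.mem_univ i) h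
  have hNN : N - N' = Kσ x0 (X i).1 * (X i).2 - Kσ x0 (X' i).1 * (X' i).2 := by
    rw [hNdef, hN'def, ← Finset.sum_sub_distrib]
    rw [Finset.sum_eq_single i]
    · intro b _ hb
      rw [hsame b hb, sub_self]
    · intro h; exact absurd (Finset.mem_univ i) h
  have hDbound : |D - D'| ≤ 2 * A := by
    rw [hDD]
    calc |Kσ x0 (X i).1 - Kσ x0 (X' i).1| ≤ |Kσ x0 (X i).1| + |Kσ x0 (X' i).1| := abs_sub _ _
      _ ≤ 2 * A := by
          have := hKb x0 (X i).1
          have := hKb x0 (X' i).1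
          rw [hAdef]; linarith
  have hNbound : |N - N'| ≤ 2 * A * Rf := by
    rw [hNN]
    calc |Kσ x0 (X i).1 * (X i).2 - Kσ x0 (X' i).1 * (X' i).2|
        ≤ |Kσ x0 (X i).1 * (X i).2| + |Kσ x0 (X' i).1 * (X' i).2| := abs_sub _ _
      _ ≤ A * Rf + A * Rf := by
          rw [abs_mul, abs_mul]
          exact add_le_add
            (mul_le_mul (hKb x0 (X i).1) (hY i) (abs_nonneg _) hA.le)
            (mul_le_mul (hKb x0 (X' i).1) hY'i (abs_nonneg _) hA.le)
      _ = 2 * A * Rf := by ring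
  refine ⟨by rw [show (2 : ℝ) * σ ^ (-(d : ℤ)) * CK = 2 * A by rw [hAdef]; ring]; exact hDbound, ?_⟩
  intro hDne hD'pos
  have key : |N / D - N' / D'| ≤ 2 * A * (Rf + |N / D|) / D' := by
    have heq : N / D - N' / D' = ((N / D) * (D' - D) + (N - N')) / D' := by
      field_simp
      ring
    rw [heq, abs_div, abs_of_pos hD'pos]
    gcongr
    calc |N / D * (D' - D) + (N - N')| ≤ |N / D * (D' - D)| + |N - N'| := abs_add_le _ _
      _ ≤ |N / D| * (2 * A) + 2 * A * Rf := by
          rw [abs_mul]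
          refine add_le_add (mul_le_mul_of_nonneg_left ?_ (abs_nonneg _)) hNbound
          rw [abs_sub_comm]; exact hDbound
      _ = 2 * A * (Rf + |N / D|) := by ring
  constructor
  · calc |N / D - N' / D'| ≤ 2 * A * (Rf + |N / D|) / D' := key
      _ = 2 * CK * σ ^ (-(d : ℤ)) * (Rf + |N / D|) / D' := by rw [hAdef]; ring_nf
  · rw [proj_eq_clamp Rf hRf, proj_eq_clamp Rf hRf]
    have := clamp_sens hRf hA hD'pos key
    calc |max (-Rf) (min (N / D) Rf) - max (-Rf) (min (N' / D') Rf)|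
        ≤ 8 * Rf * A / D' := this
      _ = 8 * Rf * CK * σ ^ (-(d : ℤ)) / D' := by rw [hAdef]; ring_nf
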